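/- If r, s ∈ ℂ³ are linearly independent over ℝ and ω(r,s) = 0, then r, s and r × s are linearly independent over ℝ. -/
import Mathlib


/-- The anti-bilinear cross product on ℂ³. -/
noncomputable def cross (r s : ℂ × ℂ × ℂ) : ℂ × ℂ × ℂ :=
  (starRingEnd ℂ r.2.1 * starRingEnd ℂ s.2.2 - starRingEnd ℂ r.2.2 * starRingEnd ℂ s.2.1,
   starRingEnd ℂ r.2.2 * starRingEnd ℂ s.1 - starRingEnd ℂ r.1 * starRingEnd ℂ s.2.2,
   starRingEnd ℂ r.1 * starRingEnd ℂ s.2.1 - starRingEnd ℂ r.2.1 * starRingEnd ℂ s.1)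

/-- The standard Hermitian inner product on ℂ³. -/
noncomputable def herm (u w : ℂ × ℂ × ℂ) : ℂ :=
  u.1 * starRingEnd ℂ w.1 + u.2.1 * starRingEnd ℂ w.2.1 + u.2.2 * starRingEnd ℂ w.2.2

/-- The standard Kähler form ω(u,w) = −Im⟨u,w⟩ on ℂ³. -/
noncomputable def omegaForm (u w : ℂ × ℂ × ℂ) : ℝ := -(herm u w).im

lemma herm_self_eq (u : ℂ × ℂ × ℂ) :
    herm u u = ((Complex.normSq u.1 + Complex.normSq u.2.1 + Complex.normSq u.2.2 : ℝ) : ℂ) := by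
  simp [herm, Complex.mul_conj]

lemma herm_self_eq_zero {u : ℂ × ℂ × ℂ} (h : herm u u = 0) : u = 0 := by
  rw [herm_self_eq] at h
  have h' : Complex.normSq u.1 + Complex.normSq u.2.1 + Complex.normSq u.2.2 = 0 := by
    exact_mod_cast h
  have h1 : Complex.normSq u.1 = 0 ∧ Complex.normSq u.2.1 = 0 ∧ Complex.normSq u.2.2 = 0 := by
    constructor
    · nlinarith [Complex.normSq_nonneg u.1, Complex.normSq_nonneg u.2.1, Complex.normSq_nonneg u.2.2]
    constructor
    · nlinarith [Complex.normSq_nonneg u.1, Complex.normSq_nonneg u.2.1, Complex.normSq_nonneg u.2.2]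
    · nlinarith [Complex.normSq_nonneg u.1, Complex.normSq_nonneg u.2.1, Complex.normSq_nonneg u.2.2]
  have e1 := Complex.normSq_eq_zero.mp h1.1
  have e2 := Complex.normSq_eq_zero.mp h1.2.1
  have e3 := Complex.normSq_eq_zero.mp h1.2.2
  exact Prod.ext e1 (Prod.ext e2 e3)

lemma herm_cross_left (r s : ℂ × ℂ × ℂ) : herm r (cross r s) = 0 := by
  simp only [herm, cross, map_sub, map_mul, Complex.conj_conj]
  ring

lemma herm_cross_right (r s : ℂ × ℂ × ℂ) : herm s (cross r s) = 0 := by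
  simp only [herm, cross, map_sub, map_mul, Complex.conj_conj]
  ring

lemma lagrange (r s : ℂ × ℂ × ℂ) :
    herm (cross r s) (cross r s) = herm r r * herm s s - herm r s * herm s r := by
  simp only [herm, cross, map_sub, map_mul, Complex.conj_conj]
  ring

lemma herm_zero_left (w : ℂ × ℂ × ℂ) : herm 0 w = 0 := by simp [herm]

lemma herm_add_left (x y w : ℂ × ℂ × ℂ) : herm (x + y) w = herm x w + herm y w := by
  simp [herm]; ring

lemma herm_rsmul_left (a : ℝ) (x w : ℂ × ℂ × ℂ) : herm (a • x) w = a * herm x w := by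
  simp [herm, Prod.smul_fst, Prod.smul_snd, Complex.real_smul]; ring

lemma rsmul_eq_csmul (a : ℝ) (x : ℂ × ℂ × ℂ) : a • x = (a : ℂ) • x := by
  rw [← Complex.coe_algebraMap, algebraMap_smul]

theorem linearIndependent_cross (r s : ℂ × ℂ × ℂ)
    (hind : LinearIndependent ℝ ![r, s]) (hω : omegaForm r s = 0) :
    LinearIndependent ℝ ![r, s, cross r s] := by
  -- pair condition
  have hpair : ∀ a b : ℝ, a • r + b • s = 0 → a = 0 ∧ b = 0 := by
    intro a b hab
    have := Fintype.linearIndependent_iff.mp hind ![a, b] (by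
      simpa [Fin.sum_univ_two] using hab)
    exact ⟨this 0, this 1⟩
  -- s ≠ 0
  have hs : s ≠ 0 := by
    intro h
    have := (hpair 0 1 (by simp [h])).2
    norm_num at this
  -- herm r s is real
  have him : (herm r s).im = 0 := by
    have : -(herm r s).im = 0 := hω
    linarith
  have hrs : herm r s = ((herm r s).re : ℝ) := by
    exact Complex.ext (by simp) (by simp [him])
  have hsr : herm s r = starRingEnd ℂ (herm r s) := by
    simp [herm, map_add, map_mul, Complex.conj_conj]; ring
  -- cross r s ≠ 0
  have ht : cross r s ≠ 0 := by
    intro h0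
    have hcc : herm r r * herm s s - herm r s * herm s r = 0 := by
      rw [← lagrange, h0]; simp [herm]
    -- equality case: v = herm s s • r - herm r s • s
    set v : ℂ × ℂ × ℂ := herm s s • r - herm r s • s with hv
    have hvv : herm v v = herm s s * (herm r r * herm s s - herm r s * herm s r) := by
      simp only [hv, herm, Prod.smul_fst, Prod.smul_snd, Prod.fst_sub, Prod.snd_sub,
        smul_eq_mul, map_sub, map_mul, map_add, Complex.conj_conj]
      ring
    have hv0 : v = 0 := herm_self_eq_zero (by rw [hvv, hcc, mul_zero])
    -- herm s s is a positive real
    have hN : herm s s = ((Complex.normSq s.1 + Complex.normSq s.2.1 + Complex.normSq s.2.2 : ℝ) : ℂ) :=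
      herm_self_eq s
    set N : ℝ := Complex.normSq s.1 + Complex.normSq s.2.1 + Complex.normSq s.2.2 with hNdef
    have hNnonneg : (0:ℝ) ≤ N := by
      have := Complex.normSq_nonneg s.1
      have := Complex.normSq_nonneg s.2.1
      have := Complex.normSq_nonneg s.2.2
      rw [hNdef]; linarith
    have hNpos : 0 < N := by
      rcases lt_or_eq_of_le hNnonneg with h | h
      · exact h
      · exfalso; exact hs (herm_self_eq_zero (by rw [hN, ← h]; simp))
    set g : ℝ := (herm r s).re with hgdef
    have hveq : (N : ℝ) • r + (-g) • s = 0 := by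
      rw [rsmul_eq_csmul, rsmul_eq_csmul]
      have : (N : ℂ) • r - (g : ℂ) • s = 0 := by
        rw [← hN, ← hrs]; exact hv0
      push_cast
      rw [neg_smul, ← sub_eq_add_neg]
      exact this
    have := (hpair N (-g) hveq).1
    linarith
  have htt : herm (cross r s) (cross r s) ≠ 0 := by
    intro h
    exact ht (herm_self_eq_zero h)
  -- main
  rw [Fintype.linearIndependent_iff]
  intro f hf
  have heq : f 0 • r + f 1 • s + f 2 • cross r s = 0 := by
    simpa [Fin.sum_univ_three] using hf
  have hc : (f 2 : ℂ) * herm (cross r s) (cross r s) = 0 := by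
    have h := congrArg (fun v => herm v (cross r s)) heq
    simpa [herm_add_left, herm_rsmul_left, herm_cross_left, herm_cross_right, herm_zero_left] using h
  have hf2 : f 2 = 0 := by
    have := mul_eq_zero.mp hc
    rcases this with h | h
    · exact_mod_cast h
    · exact absurd h htt
  have hab : f 0 • r + f 1 • s = 0 := by
    rw [hf2] at heq; simpa using heq
  have h01 := hpair (f 0) (f 1) hab
  intro i
  fin_cases i
  · exact h01.1
  · exact h01.2
  · exact hf2
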